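/- arXiv:2505.14516 — 3 statements merged into one kernel-verified Lean document; each statement's English description precedes it below -/
import Mathlib

section
/- Let F be a field of sets over a set X, let A be an atom of F, and let A' be a non-empty proper subset of A. Then every atom of the field of sets C(F ∪ {A'}) generated by F together with A' is either an atom of F, or equal to A', or equal to A \ A'. -/
/-- A field of sets over `X`: contains `X` (i.e. `univ`) and is closed under
finite unions, finite intersections and complements relative to `X`. -/
def IsSetField {X : Type*} (F : Set (Set X)) : Prop :=
  Set.univ ∈ F ∧ (∀ A ∈ F, ∀ B ∈ F, A ∪ B ∈ F) ∧
    (∀ A ∈ F, ∀ B ∈ F, A ∩ B ∈ F) ∧ (∀ A ∈ F, Aᶜ ∈ F)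

/-- An atom of a field of sets `F`: a non-empty member of `F` none of whose
non-empty proper subsets belongs to `F`. -/
def SetFieldAtom {X : Type*} (F : Set (Set X)) (A : Set X) : Prop :=
  A ∈ F ∧ A.Nonempty ∧ ∀ B ∈ F, B ⊂ A → B = ∅

/-- The field of sets generated by a family `S` of subsets of `X`:
the smallest field of sets over `X` containing every member of `S`. -/
def genSetField {X : Type*} (S : Set (Set X)) : Set (Set X) :=
  ⋂₀ {F | IsSetField F ∧ S ⊆ F}

lemma gen_isSetField {X : Type*} (S : Set (Set X)) : IsSetField (genSetField S) := by
  refine ⟨?_, ?_, ?_, ?_⟩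
  · exact fun G hG => hG.1.1
  · intro U hU V hV G hG
    exact hG.1.2.1 U (hU G hG) V (hV G hG)
  · intro U hU V hV G hG
    exact hG.1.2.2.1 U (hU G hG) V (hV G hG)
  · intro U hU G hG
    exact hG.1.2.2.2 U (hU G hG)

lemma subset_gen {X : Type*} (S : Set (Set X)) : S ⊆ genSetField S :=
  fun U hU G hG => hG.2 hU

section four
variable {X : Type*} {A A' : Set X} (hA'sub : A' ⊆ A)

def Four (A A' e : Set X) : Prop := e = ∅ ∨ e = A' ∨ e = A \ A' ∨ e = A

include hA'sub

lemma four_union {e f : Set X} (he : Four A A' e) (hf : Four A A' f) :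
    Four A A' (e ∪ f) := by
  rcases he with rfl | rfl | rfl | rfl <;> rcases hf with rfl | rfl | rfl | rfl <;>
    unfold Four <;>
    first
    | (left; ext x; have h := @hA'sub x;
       simp only [Set.mem_union, Set.mem_inter_iff, Set.mem_diff,
         Set.mem_empty_iff_false]; tauto)
    | (right; left; ext x; have h := @hA'sub x;
       simp only [Set.mem_union, Set.mem_inter_iff, Set.mem_diff,
         Set.mem_empty_iff_false]; tauto)
    | (right; right; left; ext x; have h := @hA'sub x;
       simp only [Set.mem_union, Set.mem_inter_iff, Set.mem_diff,
         Set.mem_empty_iff_false]; tauto)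
    | (right; right; right; ext x; have h := @hA'sub x;
       simp only [Set.mem_union, Set.mem_inter_iff, Set.mem_diff,
         Set.mem_empty_iff_false]; tauto)

lemma four_inter {e f : Set X} (he : Four A A' e) (hf : Four A A' f) :
    Four A A' (e ∩ f) := by
  rcases he with rfl | rfl | rfl | rfl <;> rcases hf with rfl | rfl | rfl | rfl <;>
    unfold Four <;>
    first
    | (left; ext x; have h := @hA'sub x;
       simp only [Set.mem_union, Set.mem_inter_iff, Set.mem_diff,
         Set.mem_empty_iff_false]; tauto)
    | (right; left; ext x; have h := @hA'sub x;
       simp only [Set.mem_union, Set.mem_inter_iff, Set.mem_diff,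
         Set.mem_empty_iff_false]; tauto)
    | (right; right; left; ext x; have h := @hA'sub x;
       simp only [Set.mem_union, Set.mem_inter_iff, Set.mem_diff,
         Set.mem_empty_iff_false]; tauto)
    | (right; right; right; ext x; have h := @hA'sub x;
       simp only [Set.mem_union, Set.mem_inter_iff, Set.mem_diff,
         Set.mem_empty_iff_false]; tauto)

lemma four_diff {e : Set X} (he : Four A A' e) : Four A A' (A \ e) := by
  rcases he with rfl | rfl | rfl | rfl
  · right; right; right; simp
  · right; right; left; rfl
  · right; left; exact Set.diff_diff_cancel_left hA'sub
  · left; simp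

end four

theorem stmt_0 {X : Type*} (F : Set (Set X)) (hF : IsSetField F)
    (A : Set X) (hA : SetFieldAtom F A)
    (A' : Set X) (hA'ne : A'.Nonempty) (hA'sub : A' ⊆ A) (hA'proper : A' ≠ A)
    (B : Set X) (hB : SetFieldAtom (genSetField (F ∪ {A'})) B) :
    SetFieldAtom F B ∨ B = A' ∨ B = A \ A' := by
  obtain ⟨hAF, hAne, hAatom⟩ := hA
  -- the description field
  set G : Set (Set X) :=
    {W | (∃ S ∈ F, W ∩ Aᶜ = S ∩ Aᶜ) ∧ Four A A' (W ∩ A)} with hGdef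
  have hemptyF : (∅ : Set X) ∈ F := by
    have := hF.2.2.2 Set.univ hF.1
    simpa using this
  have hGfield : IsSetField G := by
    refine ⟨⟨⟨Set.univ, hF.1, rfl⟩, ?_⟩, ?_, ?_, ?_⟩
    · right; right; right; simp
    · rintro U ⟨⟨S, hS, hUc⟩, hUe⟩ V ⟨⟨T, hT, hVc⟩, hVe⟩
      refine ⟨⟨S ∪ T, hF.2.1 S hS T hT, ?_⟩, ?_⟩
      · rw [Set.union_inter_distrib_right, Set.union_inter_distrib_right, hUc, hVc]
      · rw [Set.union_inter_distrib_right]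
        exact four_union hA'sub hUe hVe
    · rintro U ⟨⟨S, hS, hUc⟩, hUe⟩ V ⟨⟨T, hT, hVc⟩, hVe⟩
      refine ⟨⟨S ∩ T, hF.2.2.1 S hS T hT, ?_⟩, ?_⟩
      · have : U ∩ V ∩ Aᶜ = (U ∩ Aᶜ) ∩ (V ∩ Aᶜ) := by ext x; simp; tauto
        rw [this, hUc, hVc]; ext x; simp; tauto
      · have : U ∩ V ∩ A = (U ∩ A) ∩ (V ∩ A) := by ext x; simp; tauto
        rw [this]
        exact four_inter hA'sub hUe hVe
    · rintro U ⟨⟨S, hS, hUc⟩, hUe⟩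
      refine ⟨⟨Sᶜ, hF.2.2.2 S hS, ?_⟩, ?_⟩
      · ext x
        have := Set.ext_iff.mp hUc x
        simp at this ⊢
        tauto
      · have : Uᶜ ∩ A = A \ (U ∩ A) := by ext x; simp; tauto
        rw [this]
        exact four_diff hA'sub hUe
  have hFG : F ∪ {A'} ⊆ G := by
    rintro W (hW | hW)
    · refine ⟨⟨W, hW, rfl⟩, ?_⟩
      have hWA : W ∩ A ∈ F := hF.2.2.1 W hW A hAF
      by_cases h : W ∩ A = A
      · right; right; right; exact h
      · left
        exact hAatom _ hWA ⟨Set.inter_subset_right, fun hAsub => h (Set.Subset.antisymm Set.inter_subset_right hAsub)⟩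
    · simp only [Set.mem_singleton_iff] at hW
      subst hW
      refine ⟨⟨∅, hemptyF, ?_⟩, ?_⟩
      · rw [Set.empty_inter]
        rw [← Set.disjoint_iff_inter_eq_empty]
        exact Set.disjoint_compl_right_iff_subset.mpr hA'sub
      · right; left
        exact Set.inter_eq_self_of_subset_left hA'sub
  have hgenG : genSetField (F ∪ {A'}) ⊆ G :=
    Set.sInter_subset_of_mem ⟨hGfield, hFG⟩
  obtain ⟨hBmem, hBne, hBatom⟩ := hB
  obtain ⟨⟨S, hS, hBc⟩, hBe⟩ := hgenG hBmem
  have hgen := subset_gen (F ∪ {A'})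
  have hFgen : F ⊆ genSetField (F ∪ {A'}) := fun U hU => hgen (Or.inl hU)
  have hA'gen : A' ∈ genSetField (F ∪ {A'}) := hgen (Or.inr rfl)
  have hBsplit : B ∩ A ∪ B ∩ Aᶜ = B := Set.inter_union_compl B A
  have hdiffne : (A \ A').Nonempty := by
    rw [Set.diff_nonempty]
    exact fun h => hA'proper (Set.Subset.antisymm hA'sub h)
  -- helper: if B ∩ A is a nonempty subset e of A, then B ∩ Aᶜ = ∅ hence B = e
  have key : ∀ e : Set X, B ∩ A = e → e.Nonempty → B = e := by
    intro e hBA hene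
    have hBAc : B ∩ Aᶜ ∈ genSetField (F ∪ {A'}) := by
      refine (gen_isSetField _).2.2.1 B hBmem Aᶜ ?_
      exact hFgen (hF.2.2.2 A hAF)
    have hss : B ∩ Aᶜ ⊂ B := by
      refine ⟨Set.inter_subset_left, fun hsub => ?_⟩
      obtain ⟨x, hx⟩ := hene
      have hxB : x ∈ B ∩ A := hBA ▸ hx
      have := hsub hxB.1
      exact this.2 hxB.2
    have h0 := hBatom _ hBAc hss
    rw [← hBsplit, hBA, h0, Set.union_empty]
  rcases hBe with h0 | hA'e | hde | hAe
  · -- B ∩ A = ∅, so B ∈ F and it is an atom of F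
    left
    have hBeq : B = S ∩ Aᶜ := by rw [← hBsplit, h0, Set.empty_union, hBc]
    have hBF : B ∈ F := hBeq ▸ hF.2.2.1 S hS Aᶜ (hF.2.2.2 A hAF)
    exact ⟨hBF, hBne, fun C hC hCB => hBatom C (hFgen hC) hCB⟩
  · right; left; exact key A' hA'e hA'ne
  · right; right; exact key (A \ A') hde hdiffne
  · -- B ∩ A = A: then A' is a nonempty proper subset of B in the generated field
    exfalso
    have hA'B : A' ⊂ B := by
      constructor
      · intro x hx
        have hxBA : x ∈ B ∩ A := by rw [hAe]; exact hA'sub hx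
        exact hxBA.1
      · intro hsub
        obtain ⟨x, hx⟩ := hdiffne
        have hxB : x ∈ B := by
          have hxBA : x ∈ B ∩ A := by rw [hAe]; exact hx.1
          exact hxBA.1
        exact hx.2 (hsub hxB)
    have := hBatom A' hA'gen hA'B
    exact hA'ne.ne_empty this
end

section
/- Let F be a field of sets over a set X, let A be an atom of F, and let A' be a non-empty proper subset of A. Then every member B of C(F ∪ {A'}) can be written as B = D ∪ E ∪ G where D ∈ {∅, A'}, E ∈ {∅, A \ A'}, and G ∈ F. -/
theorem stmt_1 {X : Type*} (F : Set (Set X)) (hF : IsSetField F)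
    (A : Set X) (hA : SetFieldAtom F A)
    (A' : Set X) (hA'ne : A'.Nonempty) (hA'sub : A' ⊆ A) (hA'proper : A' ≠ A)
    (B : Set X) (hB : B ∈ genSetField (F ∪ {A'})) :
    ∃ D E G : Set X, D ∈ ({∅, A'} : Set (Set X)) ∧
      E ∈ ({∅, A \ A'} : Set (Set X)) ∧ G ∈ F ∧ B = D ∪ E ∪ G := by
  obtain ⟨huniv, hunion, hinter, hcompl⟩ := hF
  obtain ⟨hAF, hAne, hatom⟩ := hA
  have hempty : (∅ : Set X) ∈ F := by simpa using hcompl _ huniv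
  have dichot : ∀ G ∈ F, A ⊆ G ∨ A ∩ G = ∅ := by
    intro G hG
    by_cases h : A ∩ G = A
    · exact Or.inl (Set.inter_eq_left.mp h)
    · exact Or.inr (hatom _ (hinter _ hAF _ hG)
        (lt_of_le_of_ne Set.inter_subset_left h))
  set S' : Set (Set X) := {B | ∃ D E G : Set X, D ∈ ({∅, A'} : Set (Set X)) ∧
      E ∈ ({∅, A \ A'} : Set (Set X)) ∧ G ∈ F ∧ B = D ∪ E ∪ G} with hS'
  have hu : ∀ B1 ∈ S', ∀ B2 ∈ S', B1 ∪ B2 ∈ S' := by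
    rintro B1 ⟨D1, E1, G1, hD1, hE1, hG1, rfl⟩ B2 ⟨D2, E2, G2, hD2, hE2, hG2, rfl⟩
    refine ⟨D1 ∪ D2, E1 ∪ E2, G1 ∪ G2, ?_, ?_, hunion _ hG1 _ hG2, ?_⟩
    · simp only [Set.mem_insert_iff, Set.mem_singleton_iff] at hD1 hD2 ⊢
      rcases hD1 with h1 | h1 <;> rcases hD2 with h2 | h2 <;> rw [h1, h2] <;> simp
    · simp only [Set.mem_insert_iff, Set.mem_singleton_iff] at hE1 hE2 ⊢
      rcases hE1 with h1 | h1 <;> rcases hE2 with h2 | h2 <;> rw [h1, h2] <;> simp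
    · ext x; simp [Set.mem_union]; tauto
  have k1 : ∀ G ∈ F, (G : Set X)ᶜ ∈ S' :=
    fun G hG => ⟨∅, ∅, Gᶜ, by simp, by simp, hcompl _ hG, by simp⟩
  have k2 : ∀ G ∈ F, (A' ∪ G)ᶜ ∈ S' := by
    intro G hG
    rcases dichot G hG with hs | hs
    · refine ⟨∅, ∅, Gᶜ, by simp, by simp, hcompl _ hG, ?_⟩
      ext x
      have h1 := @hA'sub x
      have h2 := @hs x
      simp; tauto
    · refine ⟨∅, A \ A', Aᶜ ∩ Gᶜ, by simp, by simp,
        hinter _ (hcompl _ hAF) _ (hcompl _ hG), ?_⟩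
      ext x
      have h1 := @hA'sub x
      have h2 : x ∈ A → x ∉ G := fun ha hg => (Set.eq_empty_iff_forall_notMem.mp hs x) ⟨ha, hg⟩
      simp [Set.mem_diff]; tauto
  have k3 : ∀ G ∈ F, ((A \ A') ∪ G)ᶜ ∈ S' := by
    intro G hG
    rcases dichot G hG with hs | hs
    · refine ⟨∅, ∅, Gᶜ, by simp, by simp, hcompl _ hG, ?_⟩
      ext x
      have h1 := @hA'sub x
      have h2 := @hs x
      simp [Set.mem_diff]; tauto
    · refine ⟨A', ∅, Aᶜ ∩ Gᶜ, by simp, by simp,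
        hinter _ (hcompl _ hAF) _ (hcompl _ hG), ?_⟩
      ext x
      have h1 := @hA'sub x
      have h2 : x ∈ A → x ∉ G := fun ha hg => (Set.eq_empty_iff_forall_notMem.mp hs x) ⟨ha, hg⟩
      simp [Set.mem_diff]; tauto
  have k4 : ∀ G ∈ F, (A' ∪ (A \ A') ∪ G)ᶜ ∈ S' := by
    intro G hG
    refine ⟨∅, ∅, Aᶜ ∩ Gᶜ, by simp, by simp,
      hinter _ (hcompl _ hAF) _ (hcompl _ hG), ?_⟩
    ext x
    have h1 := @hA'sub x
    simp [Set.mem_diff]; tauto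
  have hc : ∀ B1 ∈ S', B1ᶜ ∈ S' := by
    rintro B1 ⟨D, E, G, hD, hE, hG, rfl⟩
    simp only [Set.mem_insert_iff, Set.mem_singleton_iff] at hD hE
    rcases hD with hD | hD <;> rcases hE with hE | hE <;> rw [hD, hE]
    · simpa using k1 G hG
    · simpa using k3 G hG
    · simpa using k2 G hG
    · exact k4 G hG
  have hi : ∀ B1 ∈ S', ∀ B2 ∈ S', B1 ∩ B2 ∈ S' := by
    intro B1 h1 B2 h2
    have := hc _ (hu _ (hc _ h1) _ (hc _ h2))
    simpa [Set.compl_union, compl_compl] using this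
  have hfield : IsSetField S' :=
    ⟨⟨∅, ∅, Set.univ, by simp, by simp, huniv, by simp⟩, hu, hi, hc⟩
  have hsub : F ∪ {A'} ⊆ S' := by
    rintro C (hC | hC)
    · exact ⟨∅, ∅, C, by simp, by simp, hC, by simp⟩
    · rw [Set.mem_singleton_iff] at hC
      rw [hC]
      exact ⟨A', ∅, ∅, by simp, by simp, hempty, by simp⟩
  exact hB S' ⟨hfield, hsub⟩
end

section
/- Let Ω be a finite set, let d ≥ 2 be an integer with |Ω| ≥ d, and let F be a function assigning to every d-element subset T of Ω a non-empty collection F(T) of 2-element subsets of T. If x1, ..., xd are sampled independently and uniformly at random from Ω, then the conditional probability that {x1, x2} ∈ F({x1, ..., xd}), given that x1, ..., xd are pairwise distinct, is at least 1/C(d,2) = 2/(d(d−1)). -/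
open Finset


/-- A permutation sending `a ↦ i` and `b ↦ j` (when `a ≠ b`, `i ≠ j`). -/
def perm2 {d : ℕ} (a b i j : Fin d) : Equiv.Perm (Fin d) :=
  (Equiv.swap b ((Equiv.swap a i) j)).trans (Equiv.swap a i)

lemma perm2_a {d : ℕ} (a b i j : Fin d) (hab : a ≠ b) (hij : i ≠ j) :
    perm2 a b i j a = i := by
  have h1 : (Equiv.swap a i) j ≠ a := by
    intro h
    apply hij
    have := congrArg (Equiv.swap a i) h
    simpa [Equiv.swap_apply_left] using this.symm
  simp only [perm2, Equiv.trans_apply]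
  rw [Equiv.swap_apply_of_ne_of_ne hab (Ne.symm h1), Equiv.swap_apply_left]

lemma perm2_b {d : ℕ} (a b i j : Fin d) :
    perm2 a b i j b = j := by
  simp only [perm2, Equiv.trans_apply, Equiv.swap_apply_left]
  exact Equiv.swap_apply_self _ _ _

lemma key {Ω : Type*} [Fintype Ω] [DecidableEq Ω] {d : ℕ} (a b : Fin d) (hab : a ≠ b)
    (F : Finset Ω → Finset (Finset Ω))
    (hF : ∀ T : Finset Ω, T.card = d →
      (F T).Nonempty ∧ ∀ P ∈ F T, P ⊆ T ∧ P.card = 2) :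
    (univ.filter fun x : Fin d → Ω => Function.Injective x).card ≤
    (univ.filter fun x : Fin d → Ω => Function.Injective x ∧
        ({x a, x b} : Finset Ω) ∈ F (Finset.image x univ)).card * d.choose 2 := by
  classical
  set A := univ.filter fun x : Fin d → Ω => Function.Injective x with hA
  set B := univ.filter fun x : Fin d → Ω => Function.Injective x ∧
      ({x a, x b} : Finset Ω) ∈ F (Finset.image x univ) with hB
  -- pair of F(image x) chosen canonically
  set pk : Finset Ω → Finset Ω := fun T => if h : (F T).Nonempty then h.choose else ∅ with hpk
  set idx : (Fin d → Ω) → Finset (Fin d) :=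
    fun x => univ.filter fun k => x k ∈ pk (Finset.image x univ) with hidx
  set mn : Finset (Fin d) → Fin d := fun s => if h : s.Nonempty then s.min' h else a with hmn
  set mx : Finset (Fin d) → Fin d := fun s => if h : s.Nonempty then s.max' h else b with hmx
  set f : (Fin d → Ω) → (Fin d → Ω) × Finset (Fin d) :=
    fun x => (x ∘ (perm2 a b (mn (idx x)) (mx (idx x))), idx x) with hf
  have hcard : A.card ≤ (B ×ˢ (univ : Finset (Fin d)).powersetCard 2).card := by
    apply Finset.card_le_card_of_injOn f
    · -- maps to
      intro x hx
      simp only [hA, Finset.mem_coe, mem_filter, mem_univ, true_and] at hx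
      have hT : (Finset.image x univ).card = d := by
        rw [Finset.card_image_of_injective _ hx, card_univ, Fintype.card_fin]
      obtain ⟨hne, hprop⟩ := hF _ hT
      have hpkx : pk (Finset.image x univ) = hne.choose := by simp [hpk, hne]
      have hPmem : pk (Finset.image x univ) ∈ F (Finset.image x univ) := by
        rw [hpkx]; exact hne.choose_spec
      obtain ⟨hPsub, hPcard⟩ := hprop _ hPmem
      set P := pk (Finset.image x univ) with hP
      -- P = image of idx x
      have hPim : P = (idx x).image x := by
        ext p
        constructor
        · intro hp
          have := hPsub hp
          simp only [Finset.mem_image, mem_univ, true_and] at this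
          obtain ⟨k, hk⟩ := this
          simp only [Finset.mem_image, hidx, mem_filter, mem_univ, true_and]
          exact ⟨k, hk ▸ hp, hk⟩
        · intro hp
          simp only [Finset.mem_image, hidx, mem_filter, mem_univ, true_and] at hp
          obtain ⟨k, hk, hk2⟩ := hp
          exact hk2 ▸ hk
      have hIcard : (idx x).card = 2 := by
        have := hPim ▸ hPcard
        rwa [Finset.card_image_of_injective _ hx] at this
      have hIne : (idx x).Nonempty := Finset.card_pos.mp (by omega)
      have hmnx : mn (idx x) = (idx x).min' hIne := by simp [hmn, hIne]
      have hmxx : mx (idx x) = (idx x).max' hIne := by simp [hmx, hIne]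
      have hij : mn (idx x) ≠ mx (idx x) := by
        rw [hmnx, hmxx]
        exact ne_of_lt (Finset.min'_lt_max'_of_card _ (by omega))
      set i := mn (idx x)
      set j := mx (idx x)
      have hiI : i ∈ idx x := hmnx ▸ Finset.min'_mem _ _
      have hjI : j ∈ idx x := hmxx ▸ Finset.max'_mem _ _
      -- {x i, x j} = P
      have hpair : ({x i, x j} : Finset Ω) = P := by
        apply Finset.eq_of_subset_of_card_le
        · intro p hp
          simp only [Finset.mem_insert, Finset.mem_singleton] at hp
          rcases hp with h | h
          · subst h; simpa [hidx] using hiI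
          · subst h; simpa [hidx] using hjI
        · rw [hPcard, Finset.card_insert_of_notMem (by simp [hx.ne hij]),
            Finset.card_singleton]
      set σ := perm2 a b i j with hσ
      have hcompinj : Function.Injective (x ∘ σ) := hx.comp σ.injective
      have himage : Finset.image (x ∘ σ) univ = Finset.image x univ := by
        ext p
        simp only [Finset.mem_image, mem_univ, true_and, Function.comp_apply]
        constructor
        · rintro ⟨k, hk⟩; exact ⟨σ k, hk⟩
        · rintro ⟨k, hk⟩; exact ⟨σ.symm k, by simpa using hk⟩
      simp only [hf, Finset.mem_coe, Finset.mem_product]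
      constructor
      · simp only [hB, mem_filter, mem_univ, true_and]
        refine ⟨hcompinj, ?_⟩
        rw [himage]
        have : ({(x ∘ σ) a, (x ∘ σ) b} : Finset Ω) = ({x i, x j} : Finset Ω) := by
          simp [hσ, perm2_a a b i j hab hij, perm2_b a b i j]
        rw [this, hpair]
        exact hPmem
      · simp only [Finset.mem_powersetCard]
        exact ⟨Finset.subset_univ _, hIcard⟩
    · -- injective
      intro x hx y hy hxy
      simp only [hf, Prod.mk.injEq] at hxy
      obtain ⟨h1, h2⟩ := hxy
      rw [h2] at h1
      funext k
      have := congrFun h1 ((perm2 a b (mn (idx y)) (mx (idx y))).symm k)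
      simpa using this
  calc A.card ≤ (B ×ˢ (univ : Finset (Fin d)).powersetCard 2).card := hcard
    _ = B.card * d.choose 2 := by
        rw [Finset.card_product, Finset.card_powersetCard, card_univ, Fintype.card_fin]

/-- Sampling `x₁, …, x_d` uniformly and independently from a finite set `Ω` of
size at least `d ≥ 2`, the conditional probability that `{x₁, x₂} ∈ F({x₁, …, x_d})`,
given that `x₁, …, x_d` are pairwise distinct, is at least `1 / C(d,2)`.
Here `F` assigns to every `d`-element subset `T` of `Ω` a non-empty collection of
`2`-element subsets of `T`.  The conditional probability for the uniform product
measure on `Ω^d` is expressed as the ratio of the number of favorable distinct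
tuples to the number of all distinct tuples. -/
theorem stmt_7 {Ω : Type*} [Fintype Ω] [DecidableEq Ω] (d : ℕ) (hd : 2 ≤ d)
    (hΩ : d ≤ Fintype.card Ω)
    (F : Finset Ω → Finset (Finset Ω))
    (hF : ∀ T : Finset Ω, T.card = d →
      (F T).Nonempty ∧ ∀ P ∈ F T, P ⊆ T ∧ P.card = 2) :
    (1 : ℝ) / (d.choose 2) ≤
      ((univ.filter fun x : Fin d → Ω => Function.Injective x ∧
          ({x ⟨0, by omega⟩, x ⟨1, by omega⟩} : Finset Ω) ∈
            F (Finset.image x univ)).card : ℝ) /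
        ((univ.filter fun x : Fin d → Ω => Function.Injective x).card : ℝ) := by
  classical
  have hab : (⟨0, by omega⟩ : Fin d) ≠ ⟨1, by omega⟩ := by simp [Fin.ext_iff]
  have hkey := key (Ω := Ω) (d := d) ⟨0, by omega⟩ ⟨1, by omega⟩ hab F hF
  have hle : Fintype.card (Fin d) ≤ Fintype.card Ω := by simpa using hΩ
  have hAne : (univ.filter fun x : Fin d → Ω => Function.Injective x).Nonempty := by
    obtain ⟨e⟩ := Function.Embedding.nonempty_of_card_le hle
    exact ⟨e, by simp [e.injective]⟩
  have hApos : (0 : ℝ) < (univ.filter fun x : Fin d → Ω => Function.Injective x).card := by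
    exact_mod_cast Finset.card_pos.mpr hAne
  have hC : (0 : ℝ) < (d.choose 2 : ℕ) := by
    have : 0 < d.choose 2 := Nat.choose_pos hd
    exact_mod_cast this
  rw [div_le_div_iff₀ hC hApos, one_mul]
  exact_mod_cast hkey
end
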